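/- arXiv:2212.14854 — 2 statements merged into one kernel-verified Lean document; each statement's English description precedes it below -/
import Mathlib

section
/- Let I = [a,b] ⊂ ℝ be a segment and let μ be a Borel probability measure supported in I with p_μ(z) ≥ 0 for all z ∈ ℂ. Then for every δ > 0 there exists a constant c = c(δ) > 0 such that p_μ(z) > c for every z ∈ ℂ with |Im z| ≥ δ. -/
open MeasureTheory Complex Set
open scoped ENNReal NNReal

noncomputable def logEnergy (μ : Measure ℂ) : EReal :=
  ((∫⁻ p : ℂ × ℂ, ENNReal.ofReal (Real.log (‖p.1 - p.2‖)) ∂(μ.prod μ) : ℝ≥0∞) : EReal)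
    - ((∫⁻ p : ℂ × ℂ, ENNReal.ofReal (-Real.log (‖p.1 - p.2‖)) ∂(μ.prod μ) : ℝ≥0∞) : EReal)

noncomputable def potential (μ : Measure ℂ) (z : ℂ) : EReal :=
  ((∫⁻ w, ENNReal.ofReal (Real.log (‖w - z‖)) ∂μ : ℝ≥0∞) : EReal)
    - ((∫⁻ w, ENNReal.ofReal (-Real.log (‖w - z‖)) ∂μ : ℝ≥0∞) : EReal)

def SupportedIn (μ : Measure ℂ) (K : Set ℂ) : Prop := μ Kᶜ = 0

noncomputable def logCapacity (K : Set ℂ) : EReal :=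
  sSup (logEnergy '' {μ : Measure ℂ | IsProbabilityMeasure μ ∧ SupportedIn μ K})

def IsEquilibriumMeasure (μ : Measure ℂ) (K : Set ℂ) : Prop :=
  IsProbabilityMeasure μ ∧ SupportedIn μ K ∧ logEnergy μ = logCapacity K

def Irr (K : Set ℂ) : Set (Polynomial ℤ) :=
  {P | P.Monic ∧ Irreducible P ∧ 1 ≤ P.natDegree ∧
    ∀ z ∈ (P.map (Int.castRingHom ℂ)).roots, z ∈ K}

noncomputable def rootMeasure (P : Polynomial ℤ) : Measure ℂ :=
  (P.natDegree : ℝ≥0∞)⁻¹ • ((P.map (Int.castRingHom ℂ)).roots.map Measure.dirac).sum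

noncomputable def Minf (K : Set ℂ) : Set (ProbabilityMeasure ℂ) :=
  ⋂ F ∈ {F : Finset (Polynomial ℤ) | ↑F ⊆ Irr K},
    closure {ν : ProbabilityMeasure ℂ |
      ν.toMeasure ∈ convexHull ℝ≥0 (rootMeasure '' (Irr K \ ↑F))}

def HarmonicOnSet (u : ℂ → ℝ) (U : Set ℂ) : Prop :=
  ∀ z ∈ U, ContDiffAt ℝ 2 u z ∧
    fderiv ℝ (fun w => fderiv ℝ u w 1) z 1
      + fderiv ℝ (fun w => fderiv ℝ u w Complex.I) z Complex.I = 0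

/-! ### Auxiliary lemmas -/

private lemma logabs_measurable (z : ℂ) :
    Measurable (fun w : ℂ => Real.log (‖w - z‖)) :=
  Real.measurable_log.comp
    ((continuous_norm.comp (continuous_id.sub continuous_const)).measurable)

private lemma log_le_log_of_le' {t M : ℝ} (ht0 : 0 ≤ t) (hM : 1 ≤ M) (ht : t ≤ M) :
    Real.log t ≤ Real.log M := by
  rcases le_or_gt t 1 with h | h
  · exact le_trans (Real.log_nonpos ht0 h) (Real.log_nonneg hM)
  · exact Real.log_le_log (by linarith) ht

private lemma ereal_coe_sub (p q : ℝ≥0∞) (hp : p ≠ ⊤) (hq : q ≠ ⊤) :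
    (p : EReal) - q = ((p.toReal - q.toReal : ℝ) : EReal) := by
  have h1 : ∀ r : ℝ≥0∞, r ≠ ⊤ → (r : EReal) = ((r.toReal : ℝ) : EReal) := by
    intro r hr
    rw [← ENNReal.ofReal_toReal hr, EReal.coe_ennreal_ofReal,
      max_eq_left ENNReal.toReal_nonneg, ENNReal.toReal_ofReal ENNReal.toReal_nonneg]
  rw [h1 p hp, h1 q hq, ← EReal.coe_sub]

private lemma ae_mem_supp {μ : Measure ℂ} {I : Set ℂ} (hsupp : SupportedIn μ I) :
    ∀ᵐ w ∂μ, w ∈ I := by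
  rw [ae_iff]
  exact hsupp

private lemma pot_eq (μ : Measure ℂ) (z : ℂ)
    (hf : Integrable (fun w : ℂ => Real.log (‖w - z‖)) μ) :
    potential μ z = ((∫ w, Real.log (‖w - z‖) ∂μ : ℝ) : EReal) := by
  have hb : ∫⁻ w, ‖Real.log (‖w - z‖)‖ₑ ∂μ ≠ ⊤ := hf.2.ne
  have h1 : ∫⁻ w, ENNReal.ofReal (Real.log (‖w - z‖)) ∂μ ≠ ⊤ := by
    refine ne_top_of_le_ne_top hb (lintegral_mono fun w => ?_)
    rw [Real.enorm_eq_ofReal_abs]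
    exact ENNReal.ofReal_le_ofReal (le_abs_self _)
  have h2 : ∫⁻ w, ENNReal.ofReal (-Real.log (‖w - z‖)) ∂μ ≠ ⊤ := by
    refine ne_top_of_le_ne_top hb (lintegral_mono fun w => ?_)
    rw [Real.enorm_eq_ofReal_abs]
    exact ENNReal.ofReal_le_ofReal (neg_le_abs _)
  rw [potential, ereal_coe_sub _ _ h1 h2,
    integral_eq_lintegral_pos_part_sub_lintegral_neg_part hf]

private lemma no_atom (a b : ℝ) (μ : Measure ℂ) [IsProbabilityMeasure μ]
    (hsupp : SupportedIn μ (Complex.ofReal '' Set.Icc a b))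
    (hpot : ∀ z : ℂ, 0 ≤ potential μ z) (p : ℝ) : μ {(p:ℂ)} = 0 := by
  by_contra hm
  have hmt : μ {(p:ℂ)} ≠ ⊤ := measure_ne_top μ _
  set mt : ℝ := (μ {(p:ℂ)}).toReal with hmtdef
  have hmt0 : 0 < mt := ENNReal.toReal_pos hm hmt
  set R : ℝ := |a| + |b| + |p| + 2 with hR
  have hR1 : 2 ≤ R := by
    have := abs_nonneg a; have := abs_nonneg b; have := abs_nonneg p; linarith
  have hlogR : 0 ≤ Real.log R := Real.log_nonneg (by linarith)
  set ε : ℝ := Real.exp (-((Real.log R + 1) / mt)) with hε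
  have hε0 : 0 < ε := Real.exp_pos _
  have hε1 : ε ≤ 1 := by
    rw [hε, Real.exp_le_one_iff]
    have : 0 ≤ (Real.log R + 1) / mt := by positivity
    linarith
  set z : ℂ := (p:ℂ) + (ε:ℂ) * Complex.I with hz
  have habs : ‖(p:ℂ) - z‖ = ε := by
    have : (p:ℂ) - z = -((ε:ℂ) * Complex.I) := by rw [hz]; ring
    rw [this, norm_neg, norm_mul, Complex.norm_I, Complex.norm_real, Real.norm_eq_abs,
      abs_of_pos hε0, mul_one]
  have hupp : ∫⁻ w, ENNReal.ofReal (Real.log (‖w - z‖)) ∂μ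
      ≤ ENNReal.ofReal (Real.log R) := by
    have hae : ∀ᵐ w ∂μ, ENNReal.ofReal (Real.log (‖w - z‖))
        ≤ ENNReal.ofReal (Real.log R) := by
      filter_upwards [ae_mem_supp hsupp] with w hw
      obtain ⟨x, hx, rfl⟩ := hw
      refine ENNReal.ofReal_le_ofReal (log_le_log_of_le' (norm_nonneg _)
        (by linarith) ?_)
      have h1 : ‖(x:ℂ) - z‖ ≤ ‖(x:ℂ)‖ + ‖z‖ := by
        exact norm_sub_le _ _
      have h2 : ‖(x:ℂ)‖ ≤ |a| + |b| := by
        rw [Complex.norm_real, Real.norm_eq_abs]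
        rcases hx with ⟨hxa, hxb⟩
        rw [abs_le]
        constructor
        · have := neg_abs_le a; have := abs_nonneg b; linarith
        · have := le_abs_self b; have := abs_nonneg a; linarith
      have h3 : ‖z‖ ≤ |p| + 1 := by
        rw [hz]
        refine le_trans ((norm_add_le _ _)) ?_
        rw [norm_mul, Complex.norm_I, Complex.norm_real, Complex.norm_real, Real.norm_eq_abs, Real.norm_eq_abs,
          abs_of_pos hε0, mul_one]
        linarith
      rw [hR]; linarith
    calc ∫⁻ w, ENNReal.ofReal (Real.log (‖w - z‖)) ∂μ
        ≤ ∫⁻ _, ENNReal.ofReal (Real.log R) ∂μ := lintegral_mono_ae hae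
      _ = ENNReal.ofReal (Real.log R) := by simp [lintegral_const, measure_univ]
  have hlow : ENNReal.ofReal (Real.log R + 1)
      ≤ ∫⁻ w, ENNReal.ofReal (-Real.log (‖w - z‖)) ∂μ := by
    have hstep : ENNReal.ofReal (Real.log R + 1)
        = ENNReal.ofReal (-Real.log (‖(p:ℂ) - z‖)) * μ {(p:ℂ)} := by
      rw [habs, hε, Real.log_exp, neg_neg, ← ENNReal.ofReal_toReal hmt, ← hmtdef,
        ← ENNReal.ofReal_mul (by positivity), div_mul_cancel₀ _ hmt0.ne']
    rw [hstep, ← lintegral_singleton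
      (fun w => ENNReal.ofReal (-Real.log (‖w - z‖))) ((p:ℂ))]
    exact setLIntegral_le_lintegral _ _
  have hAB : ∫⁻ w, ENNReal.ofReal (Real.log (‖w - z‖)) ∂μ
      < ∫⁻ w, ENNReal.ofReal (-Real.log (‖w - z‖)) ∂μ := by
    refine lt_of_le_of_lt hupp (lt_of_lt_of_le ?_ hlow)
    exact ENNReal.ofReal_lt_ofReal_iff (by linarith) |>.mpr (by linarith)
  have hc := hpot z
  rw [potential] at hc
  set A := ∫⁻ w, ENNReal.ofReal (Real.log (‖w - z‖)) ∂μ with hA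
  set B := ∫⁻ w, ENNReal.ofReal (-Real.log (‖w - z‖)) ∂μ with hB
  have hAne : A ≠ ⊤ := hAB.ne_top
  by_cases hBne : B = ⊤
  · rw [hBne, EReal.coe_ennreal_top, EReal.sub_top] at hc
    exact absurd hc (by simp)
  · rw [ereal_coe_sub A B hAne hBne, EReal.coe_nonneg] at hc
    have := ENNReal.toReal_lt_toReal hAne hBne |>.mpr hAB
    linarith

private lemma pointwise_ineq (a b δ : ℝ) (hab : a ≤ b) (hδ : 0 < δ) (x : ℝ)
    (z : ℂ) (hv : δ ≤ |z.im|) (u' : ℝ) (hne : x ≠ u')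
    (h1 : |x - u'| ≤ |x - z.re|) (h2 : |x - u'| ≤ b - a + 1) :
    Real.log (‖(x:ℂ) - (u':ℂ)‖) + Real.log (1 + δ^2/(b-a+1)^2) / 2
      ≤ Real.log (‖(x:ℂ) - z‖) := by
  set M : ℝ := b - a + 1 with hM
  have hM1 : (1:ℝ) ≤ M := by simp only [hM]; linarith
  have hK : (1:ℝ) < 1 + δ^2/M^2 := by
    have : 0 < δ^2/M^2 := by positivity
    linarith
  have e1 : Real.log (‖(x:ℂ) - (u':ℂ)‖) = Real.log ((x-u')^2) / 2 := by
    have : ((x:ℂ) - (u':ℂ)) = (((x - u' : ℝ)):ℂ) := by push_cast; ring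
    rw [this, Complex.norm_real, Real.norm_eq_abs, Real.log_abs, Real.log_pow]
    push_cast; ring
  have e2 : Real.log (‖(x:ℂ) - z‖) = Real.log ((x-z.re)^2 + z.im^2) / 2 := by
    rw [Complex.norm_def, Real.log_sqrt (Complex.normSq_nonneg _), Complex.normSq_apply]
    simp [Complex.sub_re, Complex.sub_im]
    ring_nf
  rw [e1, e2, ← add_div, div_le_div_iff_of_pos_right (by norm_num : (0:ℝ) < 2)]
  have hxu : (0:ℝ) < (x - u')^2 := by
    have h0 := sub_ne_zero.mpr hne
    positivity
  rw [← Real.log_mul (pow_ne_zero 2 (sub_ne_zero.mpr hne))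
    (by positivity : (0:ℝ) < 1 + δ^2/M^2).ne']
  apply Real.log_le_log (by positivity)
  have hq1 : (x - u')^2 ≤ (x - z.re)^2 := by
    have := mul_self_le_mul_self (abs_nonneg (x - u')) h1
    simpa [← sq, _root_.sq_abs] using this
  have hq2 : δ^2 ≤ z.im^2 := by
    have := mul_self_le_mul_self hδ.le hv
    simpa [← sq, _root_.sq_abs] using this
  have hq3 : (x - u')^2 ≤ M^2 := by
    have := mul_self_le_mul_self (abs_nonneg (x - u')) h2
    simpa [← sq, _root_.sq_abs, hM] using this
  have hMpos : (0:ℝ) < M^2 := by positivity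
  have key : (x - u')^2 * (δ^2 / M^2) ≤ δ^2 := by
    rw [mul_div_assoc', div_le_iff₀ hMpos]
    nlinarith [sq_nonneg δ]
  nlinarith [key, hq1, hq2]

private lemma clamp_facts (a b u : ℝ) (hab : a ≤ b) :
    a ≤ max a (min u b) ∧ max a (min u b) ≤ b ∧
    ∀ x ∈ Set.Icc a b, |x - max a (min u b)| ≤ |x - u| := by
  rcases le_total u a with h | h
  · rw [min_eq_left (le_trans h hab), max_eq_left h]
    refine ⟨le_refl _, hab, fun x hx => ?_⟩
    rw [_root_.abs_of_nonneg (by linarith [hx.1] : (0:ℝ) ≤ x - a)]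
    calc x - a ≤ x - u := by linarith
      _ ≤ |x - u| := le_abs_self _
  · rcases le_total u b with h2 | h2
    · rw [min_eq_left h2, max_eq_right h]
      exact ⟨h, h2, fun x _ => le_refl _⟩
    · rw [min_eq_right h2, max_eq_right hab]
      refine ⟨hab, le_refl _, fun x hx => ?_⟩
      rw [abs_of_nonpos (by linarith [hx.2] : x - b ≤ (0:ℝ))]
      calc -(x - b) = b - x := by ring
        _ ≤ u - x := by linarith
        _ = -(x - u) := by ring
        _ ≤ |x - u| := neg_le_abs _

private lemma integrable_logabs (a b : ℝ) (μ : Measure ℂ) [IsProbabilityMeasure μ]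
    (hsupp : SupportedIn μ (Complex.ofReal '' Set.Icc a b)) (z : ℂ) (δ : ℝ)
    (hδ : 0 < δ) (hv : δ ≤ |z.im|) :
    Integrable (fun w : ℂ => Real.log (‖w - z‖)) μ := by
  set Rz : ℝ := |a| + |b| + ‖z‖ + 1 with hRz
  have hRz1 : 1 ≤ Rz := by
    have := abs_nonneg a; have := abs_nonneg b; have := norm_nonneg z; linarith
  set B : ℝ := max (-Real.log δ) (Real.log Rz) with hB
  refine Integrable.mono' (integrable_const B)
    (logabs_measurable z).aestronglyMeasurable ?_
  filter_upwards [ae_mem_supp hsupp] with w hw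
  obtain ⟨x, hx, rfl⟩ := hw
  rw [Real.norm_eq_abs, abs_le]
  constructor
  · have hlb : δ ≤ ‖(x:ℂ) - z‖ := by
      refine le_trans hv ?_
      have him := Complex.abs_im_le_norm ((x:ℂ) - z)
      rwa [Complex.sub_im, Complex.ofReal_im, zero_sub, abs_neg] at him
    have h1 : Real.log δ ≤ Real.log (‖(x:ℂ) - z‖) := Real.log_le_log hδ hlb
    have h2 : -B ≤ Real.log δ := by
      rw [hB, neg_le]
      exact le_max_left _ _ |>.trans (le_refl _) |>.trans' (le_refl _) |>.trans (le_refl _)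
    linarith
  · have hub : ‖(x:ℂ) - z‖ ≤ Rz := by
      have h1 : ‖(x:ℂ) - z‖ ≤ ‖(x:ℂ)‖ + ‖z‖ := by
        exact norm_sub_le _ _
      have h2 : ‖(x:ℂ)‖ ≤ |a| + |b| := by
        rw [Complex.norm_real, Real.norm_eq_abs]
        rcases hx with ⟨hxa, hxb⟩
        rw [abs_le]
        constructor
        · have := neg_abs_le a; have := abs_nonneg b; linarith
        · have := le_abs_self b; have := abs_nonneg a; linarith
      rw [hRz]; linarith
    exact le_trans (log_le_log_of_le' (norm_nonneg _) hRz1 hub) (le_max_right _ _)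

private lemma integrable_logabs_real (a b : ℝ) (μ : Measure ℂ) [IsProbabilityMeasure μ]
    (hsupp : SupportedIn μ (Complex.ofReal '' Set.Icc a b))
    (hpot : ∀ z : ℂ, 0 ≤ potential μ z) (u' : ℝ) (hu'a : a ≤ u') (hu'b : u' ≤ b) :
    Integrable (fun w : ℂ => Real.log (‖w - (u':ℂ)‖)) μ := by
  set M : ℝ := b - a + 1 with hM
  have hM1 : (1:ℝ) ≤ M := by rw [hM]; linarith
  have hupp : ∫⁻ w, ENNReal.ofReal (Real.log (‖w - (u':ℂ)‖)) ∂μ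
      ≤ ENNReal.ofReal (Real.log M) := by
    have hae : ∀ᵐ w ∂μ, ENNReal.ofReal (Real.log (‖w - (u':ℂ)‖))
        ≤ ENNReal.ofReal (Real.log M) := by
      filter_upwards [ae_mem_supp hsupp] with w hw
      obtain ⟨x, hx, rfl⟩ := hw
      refine ENNReal.ofReal_le_ofReal (log_le_log_of_le' (norm_nonneg _) hM1 ?_)
      have : ((x:ℂ) - (u':ℂ)) = (((x - u' : ℝ)):ℂ) := by push_cast; ring
      rw [this, Complex.norm_real, Real.norm_eq_abs, abs_le]
      rcases hx with ⟨hxa, hxb⟩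
      constructor <;> [skip; skip] <;> rw [hM] <;> linarith
    calc ∫⁻ w, ENNReal.ofReal (Real.log (‖w - (u':ℂ)‖)) ∂μ
        ≤ ∫⁻ _, ENNReal.ofReal (Real.log M) ∂μ := lintegral_mono_ae hae
      _ = ENNReal.ofReal (Real.log M) := by simp [lintegral_const, measure_univ]
  have hA : ∫⁻ w, ENNReal.ofReal (Real.log (‖w - (u':ℂ)‖)) ∂μ ≠ ⊤ :=
    ne_top_of_le_ne_top ENNReal.ofReal_ne_top hupp
  have hBne : ∫⁻ w, ENNReal.ofReal (-Real.log (‖w - (u':ℂ)‖)) ∂μ ≠ ⊤ := by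
    intro h
    have hc := hpot (u':ℂ)
    rw [potential, h, EReal.coe_ennreal_top, EReal.sub_top] at hc
    exact absurd hc (by simp)
  refine ⟨(logabs_measurable _).aestronglyMeasurable, ?_⟩
  rw [HasFiniteIntegral]
  calc ∫⁻ w, ‖Real.log (‖w - (u':ℂ)‖)‖ₑ ∂μ
      ≤ ∫⁻ w, (ENNReal.ofReal (Real.log (‖w - (u':ℂ)‖))
          + ENNReal.ofReal (-Real.log (‖w - (u':ℂ)‖))) ∂μ := by
        refine lintegral_mono fun w => ?_
        rw [Real.enorm_eq_ofReal_abs]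
        rcases le_total 0 (Real.log (‖w - (u':ℂ)‖)) with h | h
        · rw [_root_.abs_of_nonneg h]; exact self_le_add_right _ _
        · rw [abs_of_nonpos h]; exact le_add_self
    _ = ∫⁻ w, ENNReal.ofReal (Real.log (‖w - (u':ℂ)‖)) ∂μ
          + ∫⁻ w, ENNReal.ofReal (-Real.log (‖w - (u':ℂ)‖)) ∂μ :=
        lintegral_add_left (ENNReal.measurable_ofReal.comp (logabs_measurable _)) _
    _ < ⊤ := ENNReal.add_lt_top.mpr ⟨hA.lt_top, hBne.lt_top⟩

theorem stmt9 (a b : ℝ) (hab : a ≤ b)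
    (I : Set ℂ) (hI : I = Complex.ofReal '' Set.Icc a b)
    (μ : Measure ℂ) (hprob : IsProbabilityMeasure μ) (hsupp : SupportedIn μ I)
    (hpot : ∀ z : ℂ, 0 ≤ potential μ z) :
    ∀ δ : ℝ, 0 < δ → ∃ c : ℝ, 0 < c ∧
      ∀ z : ℂ, δ ≤ |z.im| → ((c : ℝ) : EReal) < potential μ z := by
  intro δ hδ
  subst hI
  have hM1 : (1:ℝ) ≤ b - a + 1 := by linarith
  set c₀ : ℝ := Real.log (1 + δ^2/(b-a+1)^2) / 2 with hc₀def
  have hc₀ : 0 < c₀ := by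
    have h1 : (1:ℝ) < 1 + δ^2/(b-a+1)^2 := by
      have hp : (0:ℝ) < δ^2/(b-a+1)^2 := by positivity
      linarith
    have := Real.log_pos h1
    rw [hc₀def]; linarith
  refine ⟨c₀/2, by linarith, fun z hv => ?_⟩
  set u' : ℝ := max a (min z.re b) with hu'def
  obtain ⟨hu'a, hu'b, hclamp⟩ := clamp_facts a b z.re hab
  have hatom : μ {((u':ℝ):ℂ)} = 0 := no_atom a b μ hsupp hpot u'
  have hfz : Integrable (fun w : ℂ => Real.log (‖w - z‖)) μ :=
    integrable_logabs a b μ hsupp z δ hδ hv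
  have hg : Integrable (fun w : ℂ => Real.log (‖w - (u':ℂ)‖)) μ :=
    integrable_logabs_real a b μ hsupp hpot u' hu'a hu'b
  have hane : ∀ᵐ w ∂μ, w ≠ ((u':ℝ):ℂ) := by
    rw [ae_iff]
    convert hatom using 2
    simp
  have hae : ∀ᵐ w ∂μ, (fun w : ℂ => Real.log (‖w - (u':ℂ)‖) + c₀) w
      ≤ (fun w : ℂ => Real.log (‖w - z‖)) w := by
    filter_upwards [ae_mem_supp hsupp, hane] with w hw hne
    obtain ⟨x, hx, rfl⟩ := hw
    have hxne : x ≠ u' := fun h => hne (by rw [h])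
    have h2 : |x - u'| ≤ b - a + 1 := by
      rcases hx with ⟨hxa, hxb⟩
      rw [abs_le]
      constructor <;> linarith
    exact pointwise_ineq a b δ hab hδ x z hv u' hxne (hclamp x hx) h2
  have hint : ∫ w, (Real.log (‖w - (u':ℂ)‖) + c₀) ∂μ
      ≤ ∫ w, Real.log (‖w - z‖) ∂μ :=
    integral_mono_ae (hg.add (integrable_const c₀)) hfz hae
  rw [integral_add hg (integrable_const _), integral_const] at hint
  simp only [measureReal_def, measure_univ, ENNReal.toReal_one, one_smul, smul_eq_mul] at hint
  have hg0 : 0 ≤ ∫ w, Real.log (‖w - (u':ℂ)‖) ∂μ := by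
    have hc := hpot (u':ℂ)
    rw [pot_eq μ _ hg] at hc
    exact EReal.coe_nonneg.mp hc
  rw [pot_eq μ z hfz]
  exact EReal.coe_lt_coe_iff.mpr (by linarith)
end

section
/- Let E ⊂ ℂ ≅ ℝ² be a nonempty compact set, and let u₁ and u₂ be bounded real-valued functions that are continuous on the closure of ℂ ∖ E, harmonic on the open set ℂ ∖ E, and agree on the boundary ∂E. Then u₁ = u₂ on all of ℂ ∖ E; in other words, the exterior Dirichlet problem on ℂ ∖ E has at most one bounded solution for given continuous boundary values on ∂E. -/
open MeasureTheory Complex Set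
open scoped ENNReal NNReal

set_option maxHeartbeats 1000000
open Set Filter

noncomputable def lap (f : ℂ → ℝ) (z : ℂ) : ℝ :=
  fderiv ℝ (fun w => fderiv ℝ f w 1) z 1
    + fderiv ℝ (fun w => fderiv ℝ f w Complex.I) z Complex.I

lemma ev_cd {f : ℂ → ℝ} {z : ℂ} (hf : ContDiffAt ℝ 2 f z) :
    ∀ᶠ w in nhds z, ContDiffAt ℝ 2 f w := hf.eventually (by norm_num)

lemma cd_diff_fderiv_apply {f : ℂ → ℝ} {z : ℂ} (hf : ContDiffAt ℝ 2 f z) (e : ℂ) :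
    DifferentiableAt ℝ (fun w => fderiv ℝ f w e) z := by
  have h1 : ContDiffAt ℝ 1 (fderiv ℝ f) z := hf.fderiv_right (le_refl 2)
  have h2 : ContDiffAt ℝ 1 (fun w => fderiv ℝ f w e) z :=
    (ContinuousLinearMap.apply ℝ ℝ e).contDiff.contDiffAt.comp z h1
  exact h2.differentiableAt one_ne_zero

lemma lap_add {f g : ℂ → ℝ} {z : ℂ} (hf : ContDiffAt ℝ 2 f z) (hg : ContDiffAt ℝ 2 g z) :
    lap (fun x => f x + g x) z = lap f z + lap g z := by
  have key : ∀ e : ℂ, fderiv ℝ (fun w => fderiv ℝ (fun x => f x + g x) w e) z e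
      = fderiv ℝ (fun w => fderiv ℝ f w e) z e + fderiv ℝ (fun w => fderiv ℝ g w e) z e := by
    intro e
    have hev : (fun w => fderiv ℝ (fun x => f x + g x) w e)
        =ᶠ[nhds z] (fun w => fderiv ℝ f w e + fderiv ℝ g w e) := by
      filter_upwards [ev_cd hf, ev_cd hg] with w hfw hgw
      rw [fderiv_fun_add (hfw.differentiableAt two_ne_zero) (hgw.differentiableAt two_ne_zero)]
      rfl
    rw [hev.fderiv_eq, fderiv_fun_add (cd_diff_fderiv_apply hf e) (cd_diff_fderiv_apply hg e)]
    rfl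
  simp only [lap, key]
  ring

lemma lap_smul {f : ℂ → ℝ} {z : ℂ} (c : ℝ) (hf : ContDiffAt ℝ 2 f z) :
    lap (fun x => c * f x) z = c * lap f z := by
  have key : ∀ e : ℂ, fderiv ℝ (fun w => fderiv ℝ (fun x => c * f x) w e) z e
      = c * fderiv ℝ (fun w => fderiv ℝ f w e) z e := by
    intro e
    have hev : (fun w => fderiv ℝ (fun x => c * f x) w e)
        =ᶠ[nhds z] (fun w => c * fderiv ℝ f w e) := by
      filter_upwards [ev_cd hf] with w hfw
      rw [fderiv_const_mul (hfw.differentiableAt two_ne_zero) c]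
      rfl
    rw [hev.fderiv_eq, fderiv_const_mul (cd_diff_fderiv_apply hf e) c]
    rfl
  simp only [lap, key]
  ring

lemma lap_const (c : ℝ) (z : ℂ) : lap (fun _ => c) z = 0 := by
  have : ∀ e : ℂ, (fun w : ℂ => fderiv ℝ (fun _ : ℂ => c) w e) = fun _ => (0:ℝ) := by
    intro e; funext w; rw [fderiv_fun_const]; rfl
  simp [lap, this]


lemma oneD_second_deriv_test {φ ψ : ℝ → ℝ} {d : ℝ}
    (hφ : ∀ᶠ t in nhds (0:ℝ), HasDerivAt φ (ψ t) t)
    (hψ : HasDerivAt ψ d 0) (hmax : IsLocalMax φ 0) : d ≤ 0 := by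
  by_contra hd
  push_neg at hd
  have hψ0 : ψ 0 = 0 := by
    have h0 : HasDerivAt φ (ψ 0) 0 := hφ.self_of_nhds
    have := hmax.deriv_eq_zero
    rwa [h0.deriv] at this
  -- slope of ψ tends to d > 0
  have hslope : Tendsto (slope ψ 0) (nhdsWithin (0:ℝ) {(0:ℝ)}ᶜ) (nhds d) :=
    hasDerivAt_iff_tendsto_slope.mp hψ
  have hpos : ∀ᶠ t in nhdsWithin (0:ℝ) {(0:ℝ)}ᶜ, 0 < slope ψ 0 t :=
    hslope.eventually (eventually_gt_nhds hd)
  rw [eventually_nhdsWithin_iff] at hpos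
  obtain ⟨η₁, hη₁, H₁⟩ := Metric.eventually_nhds_iff.mp (hpos.and (hφ.and hmax))
  -- on (0, η₁): ψ t > 0
  have hψpos : ∀ t : ℝ, 0 < t → t < η₁ → 0 < ψ t := by
    intro t ht0 htη
    have hd2 : dist t 0 < η₁ := by simp [Real.dist_eq, _root_.abs_of_pos ht0, htη]
    have := (H₁ hd2).1 (by simp [ne_of_gt ht0])
    have hs : slope ψ 0 t = ψ t / t := by simp [slope, hψ0]; ring
    rw [hs] at this
    exact (div_pos_iff.mp this).resolve_right (fun h => absurd ht0 (not_lt.mpr h.2.le)) |>.1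
  set η := η₁ / 2 with hη
  have hη0 : 0 < η := by positivity
  have hηlt : η < η₁ := by linarith
  -- φ strictly mono on [0, η]
  have hmono : StrictMonoOn φ (Icc 0 η) := by
    apply strictMonoOn_of_hasDerivWithinAt_pos (convex_Icc 0 η)
    · intro t ht
      exact (((H₁ (by simp [Real.dist_eq, _root_.abs_of_nonneg ht.1]; linarith [ht.2])).2.1)).continuousAt.continuousWithinAt
    · intro t ht
      rw [interior_Icc] at ht
      exact ((H₁ (by simp [Real.dist_eq, _root_.abs_of_pos ht.1]; linarith [ht.2])).2.1).hasDerivWithinAt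
    · intro t ht
      rw [interior_Icc] at ht
      exact hψpos t ht.1 (by linarith [ht.2])
  have h1 : φ 0 < φ η := hmono (by simp [le_of_lt hη0]) (by simp [le_of_lt hη0]) hη0
  have h2 : φ η ≤ φ 0 := (H₁ (by simp [Real.dist_eq, _root_.abs_of_pos hη0, hηlt])).2.2
  linarith


lemma second_deriv_test {g : ℂ → ℝ} {p : ℂ} (e : ℂ)
    (hg : ContDiffAt ℝ 2 g p) (hmax : IsLocalMax g p) :
    fderiv ℝ (fun w => fderiv ℝ g w e) p e ≤ 0 := by
  set L : ℝ → ℂ := fun t => p + t • e with hL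
  have hLd : ∀ t : ℝ, HasDerivAt L e t := by
    intro t
    simpa [hL] using ((hasDerivAt_id t).smul_const e).const_add p
  have hLc : Continuous L := by continuity
  have hL0 : L 0 = p := by simp [hL]
  set φ : ℝ → ℝ := fun t => g (L t) with hφdef
  set ψ : ℝ → ℝ := fun t => fderiv ℝ g (L t) e with hψdef
  have hφ : ∀ᶠ t in nhds (0:ℝ), HasDerivAt φ (ψ t) t := by
    have : ∀ᶠ t in nhds (0:ℝ), ContDiffAt ℝ 2 g (L t) := by
      have := ev_cd hg
      have hcont : ContinuousAt L 0 := hLc.continuousAt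
      have := hcont.eventually (by rw [hL0] at *; exact ev_cd hg)
      exact this
    filter_upwards [this] with t ht
    have hdg : DifferentiableAt ℝ g (L t) := ht.differentiableAt two_ne_zero
    have := (hdg.hasFDerivAt.comp_hasDerivAt t (hLd t))
    exact this
  have hψd : HasDerivAt ψ (fderiv ℝ (fun w => fderiv ℝ g w e) p e) 0 := by
    have hdψ : DifferentiableAt ℝ (fun w => fderiv ℝ g w e) p := cd_diff_fderiv_apply hg e
    have h := hdψ.hasFDerivAt
    rw [← hL0] at h
    have h2 := h.comp_hasDerivAt 0 (hLd 0)
    rw [hL0] at h2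
    exact h2
  have hmaxφ : IsLocalMax φ 0 := by
    have hT : Tendsto L (nhds 0) (nhds p) := by rw [← hL0]; exact hLc.continuousAt
    have := hT.eventually hmax
    filter_upwards [this] with t ht
    simpa [hφdef, hL0] using ht
  exact oneD_second_deriv_test hφ hψd hmaxφ



noncomputable def qsq : ℂ → ℝ := fun w => w.re ^ 2 + w.im ^ 2

lemma qsq_eq_normSq (w : ℂ) : qsq w = Complex.normSq w := by
  simp [qsq, Complex.normSq_apply]; ring

lemma contDiff_qsq : ContDiff ℝ 2 qsq := by
  have h1 : ContDiff ℝ 2 fun w : ℂ => w.re := Complex.reCLM.contDiff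
  have h2 : ContDiff ℝ 2 fun w : ℂ => w.im := Complex.imCLM.contDiff
  exact (h1.pow 2).add (h2.pow 2)

lemma hasFDerivAt_qsq (w : ℂ) :
    HasFDerivAt qsq ((2 * w.re) • Complex.reCLM + (2 * w.im) • Complex.imCLM) w := by
  have h1 : HasFDerivAt (fun w : ℂ => w.re ^ 2) ((2 * w.re) • Complex.reCLM) w := by
    have := (Complex.reCLM.hasFDerivAt (x := w)).mul (Complex.reCLM.hasFDerivAt (x := w))
    have heq : (fun w : ℂ => w.re ^ 2) = fun w : ℂ => w.re * w.re := by funext x; ring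
    rw [heq]
    refine this.congr_fderiv ?_
    rw [two_mul, add_smul]
    rfl
  have h2 : HasFDerivAt (fun w : ℂ => w.im ^ 2) ((2 * w.im) • Complex.imCLM) w := by
    have := (Complex.imCLM.hasFDerivAt (x := w)).mul (Complex.imCLM.hasFDerivAt (x := w))
    have heq : (fun w : ℂ => w.im ^ 2) = fun w : ℂ => w.im * w.im := by funext x; ring
    rw [heq]
    refine this.congr_fderiv ?_
    rw [two_mul, add_smul]
    rfl
  exact h1.add h2

lemma lap_qsq (z : ℂ) : lap qsq z = 4 := by
  have key : ∀ w : ℂ, fderiv ℝ qsq w = (2 * w.re) • Complex.reCLM + (2 * w.im) • Complex.imCLM :=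
    fun w => (hasFDerivAt_qsq w).fderiv
  have e1 : (fun w : ℂ => fderiv ℝ qsq w 1) = fun w : ℂ => 2 * w.re := by
    funext w; simp [key w]
  have e2 : (fun w : ℂ => fderiv ℝ qsq w Complex.I) = fun w : ℂ => 2 * w.im := by
    funext w; simp [key w]
  have d1 : HasFDerivAt (fun w : ℂ => 2 * w.re) ((2:ℝ) • Complex.reCLM) z := by
    exact (Complex.reCLM.hasFDerivAt (x := z)).const_mul (2:ℝ)
  have d2 : HasFDerivAt (fun w : ℂ => 2 * w.im) ((2:ℝ) • Complex.imCLM) z := by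
    exact (Complex.imCLM.hasFDerivAt (x := z)).const_mul (2:ℝ)
  rw [lap, e1, e2, d1.fderiv, d2.fderiv]
  simp
  norm_num

lemma lap_le_zero_of_isLocalMax {g : ℂ → ℝ} {p : ℂ}
    (hg : ContDiffAt ℝ 2 g p) (hmax : IsLocalMax g p) : lap g p ≤ 0 := by
  have h1 := second_deriv_test 1 hg hmax
  have h2 := second_deriv_test Complex.I hg hmax
  unfold lap; linarith

lemma max_principle {U : Set ℂ} (hU : IsOpen U) {r : ℝ}
    (hUb : U ⊆ Metric.closedBall 0 r) {g : ℂ → ℝ}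
    (hgc : ContinuousOn g (closure U))
    (hg : ∀ z ∈ U, ContDiffAt ℝ 2 g z ∧ lap g z = 0)
    {b : ℝ} (hb : ∀ x ∈ frontier U, g x ≤ b) :
    ∀ w ∈ closure U, g w ≤ b := by
  intro w hw
  have hclU : closure U ⊆ Metric.closedBall 0 r :=
    closure_minimal hUb Metric.isClosed_closedBall
  have hr2 : (0:ℝ) < r ^ 2 + 1 := by positivity
  apply le_of_forall_pos_le_add
  intro ε hε
  set σ : ℝ := ε / (r ^ 2 + 1) with hσdef
  have hσ : 0 < σ := div_pos hε hr2
  set G : ℂ → ℝ := fun x => g x + σ * qsq x with hGdef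
  have hGc : ContinuousOn G (closure U) :=
    hgc.add ((continuous_const.mul contDiff_qsq.continuous).continuousOn)
  have hcomp : IsCompact (closure U) := by
    apply Metric.isCompact_of_isClosed_isBounded isClosed_closure
    exact Bornology.IsBounded.subset (Metric.isBounded_closedBall) hclU
  obtain ⟨p, hpU, hpmax⟩ := hcomp.exists_isMaxOn ⟨w, hw⟩ hGc
  have hpF : p ∈ frontier U := by
    by_contra hpf
    have hpUU : p ∈ U := by
      rw [hU.frontier_eq] at hpf
      simp only [mem_diff] at hpf
      by_contra hpu
      exact hpf ⟨hpU, hpu⟩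
    -- p interior max: contradiction with lap > 0
    have hlm : IsLocalMax G p := by
      filter_upwards [mem_of_superset (hU.mem_nhds hpUU) subset_closure] with x hx
      exact hpmax hx
    have hcq : ContDiffAt ℝ 2 (fun x : ℂ => σ * qsq x) p :=
      (contDiff_const.mul contDiff_qsq).contDiffAt
    have hcG : ContDiffAt ℝ 2 G p := ((hg p hpUU).1).add hcq
    have hlapG : lap G p = σ * 4 := by
      have h1 : lap G p = lap g p + lap (fun x => σ * qsq x) p :=
        lap_add (hg p hpUU).1 hcq
      rw [h1, (hg p hpUU).2, lap_smul σ contDiff_qsq.contDiffAt, lap_qsq]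
      ring
    have := lap_le_zero_of_isLocalMax hcG hlm
    rw [hlapG] at this
    linarith
  have hgp : g p ≤ b := hb p hpF
  have hqp : qsq p ≤ r ^ 2 := by
    have hmem := hclU hpU
    rw [Metric.mem_closedBall] at hmem
    have habs : ‖p‖ ≤ r := by
      simpa [Complex.dist_eq] using hmem
    have hq : qsq p = (‖p‖) ^ 2 := by
      rw [qsq_eq_normSq, Complex.sq_norm]
    rw [hq]
    nlinarith [norm_nonneg p]
  have hGw := hpmax hw
  have hq0 : 0 ≤ qsq w := by
    rw [qsq_eq_normSq]; exact Complex.normSq_nonneg w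
  have : g w ≤ G w := by simp [hGdef]; nlinarith
  calc g w ≤ G p := le_trans this hGw
    _ = g p + σ * qsq p := rfl
    _ ≤ b + σ * (r ^ 2) := by nlinarith
    _ ≤ b + ε := by
        have : σ * (r ^ 2) ≤ σ * (r ^ 2 + 1) := by nlinarith
        rw [hσdef] at this ⊢
        rw [div_mul_cancel₀] at this
        · linarith
        · exact ne_of_gt hr2

-- shifted square function
noncomputable def qc (z₀ : ℂ) : ℂ → ℝ := fun w => qsq (w - z₀)
noncomputable def logq (z₀ : ℂ) : ℂ → ℝ := fun w => Real.log (qc z₀ w)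

lemma qc_pos {z₀ w : ℂ} (h : w ≠ z₀) : 0 < qc z₀ w := by
  rw [qc, qsq_eq_normSq]
  exact Complex.normSq_pos.mpr (sub_ne_zero.mpr h)

lemma hasFDerivAt_qc (z₀ w : ℂ) :
    HasFDerivAt (qc z₀)
      ((2 * (w - z₀).re) • Complex.reCLM + (2 * (w - z₀).im) • Complex.imCLM) w := by
  have hsub : HasFDerivAt (fun w : ℂ => w - z₀) (ContinuousLinearMap.id ℝ ℂ) w :=
    (hasFDerivAt_id w).sub_const z₀
  have := (hasFDerivAt_qsq (w - z₀)).comp w hsub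
  exact this.congr_fderiv (ContinuousLinearMap.comp_id _)

lemma contDiffAt_logq {z₀ z : ℂ} (h : z ≠ z₀) : ContDiffAt ℝ 2 (logq z₀) z := by
  have hq : ContDiffAt ℝ 2 (qc z₀) z :=
    (contDiff_qsq.comp (contDiff_id.sub contDiff_const)).contDiffAt
  exact (Real.contDiffAt_log.mpr (ne_of_gt (qc_pos h))).comp z hq

lemma hasFDerivAt_logq {z₀ w : ℂ} (h : w ≠ z₀) :
    HasFDerivAt (logq z₀)
      ((qc z₀ w)⁻¹ • ((2 * (w - z₀).re) • Complex.reCLM + (2 * (w - z₀).im) • Complex.imCLM)) w := by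
  have := (Real.hasDerivAt_log (ne_of_gt (qc_pos h))).comp_hasFDerivAt w (hasFDerivAt_qc z₀ w)
  exact this

lemma fderiv_logq_one {z₀ w : ℂ} (h : w ≠ z₀) :
    fderiv ℝ (logq z₀) w 1 = 2 * (w - z₀).re / qc z₀ w := by
  rw [(hasFDerivAt_logq h).fderiv]
  simp [div_eq_inv_mul]

lemma fderiv_logq_I {z₀ w : ℂ} (h : w ≠ z₀) :
    fderiv ℝ (logq z₀) w Complex.I = 2 * (w - z₀).im / qc z₀ w := by
  rw [(hasFDerivAt_logq h).fderiv]
  simp [div_eq_inv_mul]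

lemma lap_logq {z₀ z : ℂ} (h : z ≠ z₀) : lap (logq z₀) z = 0 := by
  have hopen : IsOpen {w : ℂ | w ≠ z₀} := isOpen_ne
  have hmem : {w : ℂ | w ≠ z₀} ∈ nhds z := hopen.mem_nhds h
  -- first coordinate
  have hev1 : (fun w => fderiv ℝ (logq z₀) w 1)
      =ᶠ[nhds z] (fun w => 2 * (w - z₀).re / qc z₀ w) := by
    filter_upwards [hmem] with w hw
    exact fderiv_logq_one hw
  have hev2 : (fun w => fderiv ℝ (logq z₀) w Complex.I)
      =ᶠ[nhds z] (fun w => 2 * (w - z₀).im / qc z₀ w) := by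
    filter_upwards [hmem] with w hw
    exact fderiv_logq_I hw
  set x : ℝ := (z - z₀).re
  set y : ℝ := (z - z₀).im
  set q : ℝ := qc z₀ z with hqdef
  have hq0 : 0 < q := qc_pos h
  have hqxy : q = x ^ 2 + y ^ 2 := rfl
  -- derivative of numerators
  have hnum1 : HasFDerivAt (fun w : ℂ => 2 * (w - z₀).re) ((2:ℝ) • (Complex.reCLM.comp (ContinuousLinearMap.id ℝ ℂ))) z := by
    have : HasFDerivAt (fun w : ℂ => (w - z₀).re) (Complex.reCLM.comp (ContinuousLinearMap.id ℝ ℂ)) z :=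
      Complex.reCLM.hasFDerivAt.comp z ((hasFDerivAt_id z).sub_const z₀)
    exact this.const_mul (2:ℝ)
  have hnum2 : HasFDerivAt (fun w : ℂ => 2 * (w - z₀).im) ((2:ℝ) • (Complex.imCLM.comp (ContinuousLinearMap.id ℝ ℂ))) z := by
    have : HasFDerivAt (fun w : ℂ => (w - z₀).im) (Complex.imCLM.comp (ContinuousLinearMap.id ℝ ℂ)) z :=
      Complex.imCLM.hasFDerivAt.comp z ((hasFDerivAt_id z).sub_const z₀)
    exact this.const_mul (2:ℝ)
  -- derivative of (qc z₀)⁻¹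
  have hinv : HasFDerivAt (fun w : ℂ => (qc z₀ w)⁻¹)
      ((-(q ^ 2)⁻¹) • ((2 * x) • Complex.reCLM + (2 * y) • Complex.imCLM)) z :=
    (hasDerivAt_inv (ne_of_gt hq0)).comp_hasFDerivAt z (hasFDerivAt_qc z₀ z)
  -- product rule for F₁
  have hF1 : HasFDerivAt (fun w : ℂ => 2 * (w - z₀).re / qc z₀ w)
      (((2 * x) : ℝ) • ((-(q ^ 2)⁻¹) • ((2 * x) • Complex.reCLM + (2 * y) • Complex.imCLM))
        + (q⁻¹ : ℝ) • ((2:ℝ) • (Complex.reCLM.comp (ContinuousLinearMap.id ℝ ℂ)))) z := by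
    have := hnum1.mul hinv
    simpa [div_eq_mul_inv, x, y, q, Pi.mul_def] using this
  have hF2 : HasFDerivAt (fun w : ℂ => 2 * (w - z₀).im / qc z₀ w)
      (((2 * y) : ℝ) • ((-(q ^ 2)⁻¹) • ((2 * x) • Complex.reCLM + (2 * y) • Complex.imCLM))
        + (q⁻¹ : ℝ) • ((2:ℝ) • (Complex.imCLM.comp (ContinuousLinearMap.id ℝ ℂ)))) z := by
    have := hnum2.mul hinv
    simpa [div_eq_mul_inv, x, y, q, Pi.mul_def] using this
  have e1 : fderiv ℝ (fun w => fderiv ℝ (logq z₀) w 1) z 1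
      = (2 * x) * (-(q ^ 2)⁻¹) * (2 * x) + q⁻¹ * 2 := by
    rw [hev1.fderiv_eq, hF1.fderiv]
    simp
    ring
  have e2 : fderiv ℝ (fun w => fderiv ℝ (logq z₀) w Complex.I) z Complex.I
      = (2 * y) * (-(q ^ 2)⁻¹) * (2 * y) + q⁻¹ * 2 := by
    rw [hev2.fderiv_eq, hF2.fderiv]
    simp
    ring
  rw [lap, e1, e2]
  have : q ^ 2 ≠ 0 := by positivity
  field_simp
  nlinarith [hqxy]

lemma key_half {E : Set ℂ} (hEc : IsCompact E) (hne : E.Nonempty)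
    {v : ℂ → ℝ} {M : ℝ} (hbv : ∀ z, |v z| ≤ M)
    (hcv : ContinuousOn v (closure Eᶜ))
    (hhv : ∀ z ∈ Eᶜ, ContDiffAt ℝ 2 v z ∧ lap v z = 0)
    (hfv : ∀ x ∈ frontier E, v x = 0) :
    ∀ z ∈ Eᶜ, v z ≤ 0 := by
  intro z hz
  have hM : 0 ≤ M := le_trans (abs_nonneg _) (hbv 0)
  have hEclosed : IsClosed E := hEc.isClosed
  have hEco : IsOpen Eᶜ := hEclosed.isOpen_compl
  -- a frontier point z₀
  obtain ⟨z₀, hz₀⟩ : (frontier E).Nonempty := by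
    rw [nonempty_iff_ne_empty]
    intro hfe
    have hclopen : IsClopen E := isClopen_iff_frontier_eq_empty.mpr hfe
    rcases isClopen_iff.mp hclopen with h | h
    · exact hne.ne_empty h
    · rw [h] at hz; exact hz (mem_univ z)
  have hz₀E : z₀ ∈ E := by
    have := hz₀.1
    rwa [hEclosed.closure_eq] at this
  have hzz₀ : z ≠ z₀ := fun h => hz (h ▸ hz₀E)
  have hz₀cl : z₀ ∈ closure Eᶜ := by
    rw [← frontier_compl] at hz₀
    exact frontier_subset_closure hz₀
  have hvz₀ : v z₀ = 0 := hfv z₀ hz₀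
  -- it suffices to bound by every ε
  apply le_of_forall_pos_le_add
  intro ε hε
  rw [zero_add]
  -- continuity at z₀
  obtain ⟨δ₁, hδ₁, hδ₁p⟩ : ∃ δ₁ > 0, ∀ w ∈ closure Eᶜ,
      dist w z₀ < δ₁ → |v w| < ε / 2 := by
    have hcw : ContinuousWithinAt v (closure Eᶜ) z₀ := hcv z₀ hz₀cl
    rw [Metric.continuousWithinAt_iff] at hcw
    obtain ⟨δ₁, hδ₁, hp⟩ := hcw (ε / 2) (by linarith)
    refine ⟨δ₁, hδ₁, fun w hw hd => ?_⟩
    have := hp hw hd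
    rwa [Real.dist_eq, hvz₀, sub_zero] at this
  set δ : ℝ := min (δ₁ / 2) (dist z z₀ / 2) with hδdef
  have hdzz : 0 < dist z z₀ := dist_pos.mpr hzz₀
  have hδ0 : 0 < δ := lt_min (by linarith) (by linarith)
  have hδlt : δ < δ₁ := lt_of_le_of_lt (min_le_left _ _) (by linarith)
  -- key quantities
  have hqcz : qc z₀ z = (dist z z₀) ^ 2 := by
    rw [qc, qsq_eq_normSq, Complex.dist_eq, ← Complex.sq_norm]
  have hqczδ : δ ^ 2 < qc z₀ z := by
    rw [hqcz]
    have hδd : δ < dist z z₀ := lt_of_le_of_lt (min_le_right _ _) (by linarith)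
    nlinarith
  have hδ2pos : (0:ℝ) < δ ^ 2 := by positivity
  have hqczpos : (0:ℝ) < qc z₀ z := lt_trans hδ2pos hqczδ
  set A : ℝ := Real.log (qc z₀ z) - Real.log (δ ^ 2) with hAdef
  have hA0 : 0 < A := by
    have := Real.log_lt_log hδ2pos hqczδ
    linarith
  -- choose R'
  set L : ℝ := max (Real.log (qc z₀ z) + 1) (Real.log (δ ^ 2) + 2 * M * A / ε + 1) with hLdef
  set R' : ℝ := Real.exp L with hRdef
  have hqczR : qc z₀ z < R' := by
    calc qc z₀ z = Real.exp (Real.log (qc z₀ z)) := (Real.exp_log hqczpos).symm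
      _ < Real.exp L := by
          apply Real.exp_lt_exp.mpr
          calc Real.log (qc z₀ z) < Real.log (qc z₀ z) + 1 := by linarith
            _ ≤ L := le_max_left _ _
  have hlogR : Real.log R' = L := Real.log_exp L
  set c : ℝ := Real.log R' - Real.log (δ ^ 2) with hcdef
  have hc0 : 0 < c := by
    rw [hcdef, hlogR]
    have h1 : Real.log (δ ^ 2) + 2 * M * A / ε + 1 ≤ L := le_max_right _ _
    have h2 : 0 ≤ 2 * M * A / ε := by positivity
    linarith
  have hcA : 2 * M * A / ε + 1 ≤ c := by
    rw [hcdef, hlogR]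
    have := le_max_right (Real.log (qc z₀ z) + 1) (Real.log (δ ^ 2) + 2 * M * A / ε + 1)
    linarith
  set m : ℝ := M / c with hmdef
  have hm0 : 0 ≤ m := div_nonneg hM (le_of_lt hc0)
  clear_value A L R' c m
  -- the barrier constants
  set c₁ : ℝ := -m with hc₁def
  set c₂ : ℝ := -(ε / 2) + m * Real.log (δ ^ 2) with hc₂def
  set g : ℂ → ℝ := fun x => v x + (c₁ * logq z₀ x + c₂) with hgdef
  -- the domain
  set Ω : Set ℂ := Eᶜ ∩ {w | δ ^ 2 < qc z₀ w} ∩ {w | qc z₀ w < R'} with hΩdef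
  have hqcont : Continuous (qc z₀) :=
    contDiff_qsq.continuous.comp (continuous_id.sub continuous_const)
  have hΩopen : IsOpen Ω :=
    ((hEco.inter (isOpen_lt continuous_const hqcont)).inter (isOpen_lt hqcont continuous_const))
  -- Ω not containing z₀-neighborhood: points of Ω are ≠ z₀ and in Eᶜ
  have hΩq : ∀ w ∈ Ω, δ ^ 2 < qc z₀ w ∧ qc z₀ w < R' ∧ w ∈ Eᶜ ∧ w ≠ z₀ := by
    intro w hw
    obtain ⟨⟨hw1, hw2⟩, hw3⟩ := hw
    simp only [mem_setOf_eq] at hw2 hw3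
    refine ⟨hw2, hw3, hw1, ?_⟩
    intro h
    rw [h] at hw2
    have h0 : qc z₀ z₀ = 0 := by simp [qc, qsq]
    rw [h0] at hw2
    linarith
  -- closure Ω props
  have hclΩ : closure Ω ⊆ closure Eᶜ ∩ {w | δ ^ 2 ≤ qc z₀ w} ∩ {w | qc z₀ w ≤ R'} := by
    apply closure_minimal ?_ ((isClosed_closure.inter (isClosed_le continuous_const hqcont)).inter
      (isClosed_le hqcont continuous_const))
    intro w hw
    obtain ⟨h2, h3, h1, _⟩ := hΩq w hw
    exact ⟨⟨subset_closure h1, le_of_lt h2⟩, le_of_lt h3⟩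
  have hclne : ∀ w ∈ closure Ω, w ≠ z₀ := by
    intro w hw h
    have h1 := (hclΩ hw).1.2
    simp only [mem_setOf_eq] at h1
    rw [h] at h1
    have h0 : qc z₀ z₀ = 0 := by simp [qc, qsq]
    rw [h0] at h1
    linarith
  -- boundedness
  have hΩb : Ω ⊆ Metric.closedBall 0 (‖z₀‖ + Real.sqrt R') := by
    intro w hw
    obtain ⟨_, hw3, _, _⟩ := hΩq w hw
    rw [Metric.mem_closedBall, Complex.dist_eq, sub_zero]
    have h1 : ‖w - z₀‖ ≤ Real.sqrt R' := by
      have h2 : qc z₀ w = ‖w - z₀‖ ^ 2 := by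
        rw [qc, qsq_eq_normSq, Complex.sq_norm]
      rw [h2] at hw3
      have := Real.sqrt_le_sqrt (le_of_lt hw3)
      rwa [Real.sqrt_sq (norm_nonneg _)] at this
    calc ‖w‖ = ‖z₀ + (w - z₀)‖ := by ring_nf
      _ ≤ ‖z₀‖ + ‖w - z₀‖ := norm_add_le _ _
      _ ≤ ‖z₀‖ + Real.sqrt R' := by linarith
  -- continuity of g on closure Ω
  have hgc : ContinuousOn g (closure Ω) := by
    apply ContinuousOn.add
    · exact hcv.mono (fun w hw => (hclΩ hw).1.1)
    · apply ContinuousOn.add ?_ continuousOn_const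
      apply ContinuousOn.mul continuousOn_const
      intro w hw
      exact ((contDiffAt_logq (hclne w hw)).continuousAt).continuousWithinAt
  -- harmonicity of g on Ω
  have hgh : ∀ w ∈ Ω, ContDiffAt ℝ 2 g w ∧ lap g w = 0 := by
    intro w hw
    obtain ⟨_, _, hwE, hwz₀⟩ := hΩq w hw
    have hvw := hhv w hwE
    have hlw : ContDiffAt ℝ 2 (logq z₀) w := contDiffAt_logq hwz₀
    have hBcd : ContDiffAt ℝ 2 (fun x => c₁ * logq z₀ x + c₂) w :=
      (contDiffAt_const.mul hlw).add contDiffAt_const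
    constructor
    · exact hvw.1.add hBcd
    · rw [hgdef]
      rw [lap_add hvw.1 hBcd, hvw.2,
        lap_add (contDiffAt_const.mul hlw) contDiffAt_const,
        lap_smul c₁ hlw, lap_logq hwz₀, lap_const]
      ring
  -- boundary bound
  have hfb : ∀ x ∈ frontier Ω, g x ≤ 0 := by
    intro x hx
    have hxcl : x ∈ closure Ω := frontier_subset_closure hx
    have hxnΩ : x ∉ Ω := by
      rw [hΩopen.frontier_eq] at hx
      exact hx.2
    obtain ⟨⟨hx1, hx2⟩, hx3⟩ := hclΩ hxcl
    simp only [mem_setOf_eq] at hx2 hx3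
    have hxz₀ : x ≠ z₀ := hclne x hxcl
    have hlogx : Real.log (δ ^ 2) ≤ logq z₀ x := by
      rw [logq]
      exact Real.log_le_log hδ2pos hx2
    by_cases hxE : x ∈ E
    · -- x ∈ frontier E, v x = 0
      have hxf : x ∈ frontier E := by
        constructor
        · exact subset_closure hxE
        · intro hint
          obtain ⟨t, hts, hto, hxt⟩ := mem_nhds_iff.mp (mem_interior_iff_mem_nhds.mp hint)
          obtain ⟨y, hy1, hy2⟩ := mem_closure_iff.mp hx1 t hto hxt
          exact hy2 (hts hy1)
      have hvx : v x = 0 := hfv x hxf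
      show v x + (c₁ * logq z₀ x + c₂) ≤ 0
      rw [hvx, hc₁def, hc₂def]
      have hprod : 0 ≤ m * (logq z₀ x - Real.log (δ ^ 2)) :=
        mul_nonneg hm0 (by linarith)
      nlinarith [hprod]
    · -- x ∈ Eᶜ: then qc = δ² or qc = R'
      have hxEc : x ∈ Eᶜ := hxE
      have hcase : qc z₀ x = δ ^ 2 ∨ qc z₀ x = R' := by
        by_contra hcon
        push_neg at hcon
        apply hxnΩ
        exact ⟨⟨hxEc, lt_of_le_of_ne hx2 (Ne.symm hcon.1)⟩, lt_of_le_of_ne hx3 hcon.2⟩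
      rcases hcase with hcq | hcq
      · -- inner circle: |v x| < ε/2, barrier = ε/2
        have h2 : ‖x - z₀‖ ^ 2 = δ ^ 2 := by
          have h3 : qc z₀ x = ‖x - z₀‖ ^ 2 := by
            rw [qc, qsq_eq_normSq, Complex.sq_norm]
          rw [← h3, hcq]
        have hdist : dist x z₀ = δ := by
          rw [Complex.dist_eq, ← Real.sqrt_sq (norm_nonneg (x - z₀)), h2,
            Real.sqrt_sq hδ0.le]
        have hvx : |v x| < ε / 2 := hδ₁p x hx1 (by rw [hdist]; exact hδlt)
        have hlogqx : logq z₀ x = Real.log (δ ^ 2) := by rw [logq, hcq]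
        show v x + (c₁ * logq z₀ x + c₂) ≤ 0
        rw [hlogqx, hc₁def, hc₂def]
        have := abs_lt.mp hvx
        linarith [this.2]
      · -- outer circle: v x ≤ M, barrier = ε/2 + M
        have hvx : v x ≤ M := le_trans (le_abs_self _) (hbv x)
        have hlogqx : logq z₀ x = Real.log R' := by rw [logq, hcq]
        have hmc : m * c = M := by
          rw [hmdef]
          field_simp
        rw [hcdef] at hmc
        show v x + (c₁ * logq z₀ x + c₂) ≤ 0
        rw [hlogqx, hc₁def, hc₂def]
        ring_nf at hmc ⊢
        nlinarith [hmc, hvx, hε]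
  -- apply the maximum principle
  have hzΩ : z ∈ Ω := ⟨⟨hz, hqczδ⟩, hqczR⟩
  have hmp := max_principle hΩopen hΩb hgc hgh hfb z (subset_closure hzΩ)
  -- unfold: v z ≤ ε/2 + m * A ≤ ε
  rw [hgdef] at hmp
  simp only at hmp
  have this : v z + (c₁ * logq z₀ z + c₂) ≤ 0 := hmp
  have hlogz : logq z₀ z = Real.log (qc z₀ z) := rfl
  rw [hlogz, hc₁def, hc₂def] at this
  -- v z ≤ ε/2 + m * A
  have hvz : v z ≤ ε / 2 + m * A := by rw [hAdef]; linarith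
  -- m * A ≤ ε / 2
  have hmA : m * A ≤ ε / 2 := by
    rw [hmdef, div_mul_eq_mul_div, div_le_iff₀ hc0]
    have h1 : ε * (2 * M * A / ε + 1) ≤ ε * c := mul_le_mul_of_nonneg_left hcA hε.le
    have h2 : ε * (2 * M * A / ε + 1) = 2 * M * A + ε := by field_simp
    rw [h2] at h1
    have hMA : 0 ≤ M * A := mul_nonneg hM hA0.le
    nlinarith [h1, hMA, hε]
  linarith

lemma lap_sub {f g : ℂ → ℝ} {z : ℂ} (hf : ContDiffAt ℝ 2 f z) (hg : ContDiffAt ℝ 2 g z) :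
    lap (fun x => f x - g x) z = lap f z - lap g z := by
  have h : (fun x => f x - g x) = fun x => f x + (-1:ℝ) * g x := by funext x; ring
  rw [h, lap_add hf (contDiffAt_const.mul hg), lap_smul (-1) hg]
  ring

theorem stmt13 (E : Set ℂ) (hne : E.Nonempty) (hEc : IsCompact E)
    (u₁ u₂ : ℂ → ℝ)
    (hb₁ : ∃ M : ℝ, ∀ z : ℂ, |u₁ z| ≤ M) (hb₂ : ∃ M : ℝ, ∀ z : ℂ, |u₂ z| ≤ M)
    (hc₁ : ContinuousOn u₁ (closure Eᶜ)) (hc₂ : ContinuousOn u₂ (closure Eᶜ))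
    (hh₁ : HarmonicOnSet u₁ Eᶜ) (hh₂ : HarmonicOnSet u₂ Eᶜ)
    (heq : Set.EqOn u₁ u₂ (frontier E)) :
    Set.EqOn u₁ u₂ Eᶜ := by
  intro z hz
  obtain ⟨M₁, h₁⟩ := hb₁
  obtain ⟨M₂, h₂⟩ := hb₂
  have hbd : ∀ w : ℂ, |u₁ w - u₂ w| ≤ M₁ + M₂ := fun w =>
    le_trans (abs_sub _ _) (add_le_add (h₁ w) (h₂ w))
  have hbd' : ∀ w : ℂ, |u₂ w - u₁ w| ≤ M₁ + M₂ := fun w => by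
    rw [abs_sub_comm]; exact hbd w
  have hharm : ∀ w ∈ Eᶜ, ContDiffAt ℝ 2 (fun x => u₁ x - u₂ x) w ∧
      lap (fun x => u₁ x - u₂ x) w = 0 := by
    intro w hw
    have H1 := hh₁ w hw
    have H2 := hh₂ w hw
    refine ⟨H1.1.sub H2.1, ?_⟩
    rw [lap_sub H1.1 H2.1]
    have e1 : lap u₁ w = 0 := H1.2
    have e2 : lap u₂ w = 0 := H2.2
    rw [e1, e2]; ring
  have hharm' : ∀ w ∈ Eᶜ, ContDiffAt ℝ 2 (fun x => u₂ x - u₁ x) w ∧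
      lap (fun x => u₂ x - u₁ x) w = 0 := by
    intro w hw
    have H1 := hh₁ w hw
    have H2 := hh₂ w hw
    refine ⟨H2.1.sub H1.1, ?_⟩
    rw [lap_sub H2.1 H1.1]
    have e1 : lap u₁ w = 0 := H1.2
    have e2 : lap u₂ w = 0 := H2.2
    rw [e1, e2]; ring
  have hk1 := key_half hEc hne hbd (hc₁.sub hc₂) hharm
    (fun x hx => sub_eq_zero.mpr (heq hx)) z hz
  have hk2 := key_half hEc hne hbd' (hc₂.sub hc₁) hharm'
    (fun x hx => sub_eq_zero.mpr (heq hx).symm) z hz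
  have : u₁ z - u₂ z ≤ 0 := hk1
  have : u₂ z - u₁ z ≤ 0 := hk2
  linarith
end
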